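/- For every real x > 0, one has 1 ≤ sinh(x)/x ≤ exp(x²/6). -/

import Mathlib

open Nat

lemma six_pow_mul_factorial_le (n : ℕ) : 6 ^ n * n ! ≤ (2 * n + 1)! := by
  induction n with
  | zero => simp
  | succ n ih =>
    have h : (2 * (n + 1) + 1)! = (2 * n + 3) * ((2 * n + 2) * (2 * n + 1)!) := by
      rw [show 2 * (n + 1) + 1 = (2 * n + 1) + 1 + 1 from by ring,
        Nat.factorial_succ, Nat.factorial_succ]
    rw [h]
    calc 6 ^ (n + 1) * (n + 1)! = (6 * (n + 1)) * (6 ^ n * n !) := by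
          rw [Nat.factorial_succ]; ring
      _ ≤ (6 * (n + 1)) * (2 * n + 1)! := by
          exact Nat.mul_le_mul_left _ ih
      _ ≤ (2 * n + 3) * ((2 * n + 2) * (2 * n + 1)!) := by
          rw [← mul_assoc]
          refine Nat.mul_le_mul_right _ ?_
          nlinarith

theorem sinh_div_self_bounds (x : ℝ) (hx : 0 < x) :
    1 ≤ Real.sinh x / x ∧ Real.sinh x / x ≤ Real.exp (x ^ 2 / 6) := by
  constructor
  · rw [le_div_iff₀ hx, one_mul]
    exact (Real.self_lt_sinh_iff.mpr hx).le
  · rw [div_le_iff₀ hx]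
    have hsum : HasSum (fun n : ℕ ↦ x * ((x ^ 2 / 6) ^ n / n !))
        (Real.exp (x ^ 2 / 6) * x) := by
      rw [mul_comm]
      have := (NormedSpace.expSeries_div_hasSum_exp (x ^ 2 / 6)).mul_left x
      rwa [Real.exp_eq_exp_ℝ]
    refine hasSum_le (fun n ↦ ?_) x.hasSum_sinh hsum
    ·
      have hfac : (6 : ℝ) ^ n * n ! ≤ (2 * n + 1)! := by
        exact_mod_cast six_pow_mul_factorial_le n
      have h1 : (0:ℝ) < 6 ^ n * n ! := by positivity
      have hxp : (0:ℝ) ≤ x ^ (2 * n + 1) := by positivity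
      calc x ^ (2 * n + 1) / (2 * n + 1)! ≤ x ^ (2 * n + 1) / (6 ^ n * n !) := by
            apply div_le_div_of_nonneg_left hxp h1 hfac
        _ = x * ((x ^ 2 / 6) ^ n / n !) := by
            rw [div_pow, ← pow_mul]
            field_simp
            ring
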